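/- Let f : 𝕋 → ℝ be continuous on the circle 𝕋 = ℝ/ℤ with 0 ≤ f ≤ 1, and let φ ∈ Φ. Suppose that for almost every y ∈ [0,1) the superlevel set E_y = {x : f(x) > y} has finitely many component arcs, N(E_y) of them, and that ∫_0^1 |E_y| φ(|E_y|/N(E_y)) dy < ∞ (the integrand interpreted as 0 when E_y is empty). Then there exists a constant C > 0 such that ω(f,t)_1 ≤ C/φ(t) for all t ∈ (0,1]. -/

import Mathlib

open MeasureTheory Set
open scoped ENNReal

/-- The `L^p` modulus of continuity `ω(f,t)_p` on the circle `𝕋 = ℝ/ℤ`. -/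
noncomputable def modulus (f : AddCircle (1:ℝ) → ℝ) (p t : ℝ) : ℝ :=
  ⨆ h : {h : ℝ // |h| ≤ t},
    (∫ x : AddCircle (1:ℝ), |f (x + ((h.1 : ℝ) : AddCircle (1:ℝ))) - f x| ^ p) ^ (1/p)

/-- `τ(h,E)`: the measure of the set where the characteristic function of `E`
translated by `h` differs from itself. -/
noncomputable def tau (h : ℝ) (E : Set (AddCircle (1:ℝ))) : ℝ :=
  (volume {x : AddCircle (1:ℝ) |
    E.indicator (fun _ => (1:ℝ)) (x + ((h : ℝ) : AddCircle (1:ℝ)))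
      ≠ E.indicator (fun _ => (1:ℝ)) x}).toReal

/-- The open arc of the circle which is the image of the interval `(a, a+l)`. -/
noncomputable def arc (a l : ℝ) : Set (AddCircle (1:ℝ)) :=
  (fun r : ℝ => (r : AddCircle (1:ℝ))) '' Set.Ioo a (a + l)

/-- The class `Φ`: `φ` is positive and non-increasing on `(0,1]`, and `t ↦ t·φ(t)` is
non-decreasing, concave and bounded on some interval `(0,1/c)` with `c > 1`. -/
def IsPhiClass (φ : ℝ → ℝ) : Prop :=
  (∀ t ∈ Set.Ioc (0:ℝ) 1, 0 < φ t) ∧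
  AntitoneOn φ (Set.Ioc 0 1) ∧
  ∃ c > (1:ℝ), MonotoneOn (fun t => t * φ t) (Set.Ioo 0 (1/c)) ∧
    ConcaveOn ℝ (Set.Ioo 0 (1/c)) (fun t => t * φ t) ∧
    BddAbove ((fun t => t * φ t) '' Set.Ioo 0 (1/c))

namespace StmtOneHelper

local notation "𝕋" => AddCircle (1:ℝ)

lemma coe_sub' (x r : ℝ) : ((x - r : ℝ) : 𝕋) = (x : 𝕋) - (r : 𝕋) := rfl

lemma coe_eq_coe {x r : ℝ} : (x : 𝕋) = (r : 𝕋) ↔ ∃ n : ℤ, x = r + n := by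
  rw [show ((x : 𝕋) = (r:𝕋)) ↔ (((x - r : ℝ) : 𝕋) = 0) by rw [coe_sub', sub_eq_zero]]
  rw [AddCircle.coe_eq_zero_iff]
  constructor
  · rintro ⟨n, hn⟩; exact ⟨n, by simp at hn; linarith⟩
  · rintro ⟨n, hn⟩; exact ⟨n, by simp; linarith⟩

lemma isOpen_arc (a l : ℝ) : IsOpen (arc a l) :=
  QuotientAddGroup.isOpenMap_coe _ isOpen_Ioo

lemma volume_image_Ioo (u v : ℝ) (h : v ≤ u + 1) :
    volume ((fun r : ℝ => (r : 𝕋)) '' Set.Ioo u v) = ENNReal.ofReal (v - u) := by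
  rcases le_or_gt v u with hvu | huv
  · rw [Set.Ioo_eq_empty (by exact fun hlt => absurd hvu (not_le.2 hlt)), Set.image_empty,
      measure_empty, Eq.comm, ENNReal.ofReal_eq_zero]
    linarith
  · have hmeas : MeasurableSet ((fun r : ℝ => (r : 𝕋)) '' Set.Ioo u v) :=
      (QuotientAddGroup.isOpenMap_coe _ isOpen_Ioo).measurableSet
    rw [AddCircle.add_projection_respects_measure (1:ℝ) u hmeas]
    have hset : (QuotientAddGroup.mk ⁻¹' ((fun r : ℝ => (r : 𝕋)) '' Set.Ioo u v)
        ∩ Set.Ioc u (u + 1)) = Set.Ioo u v := by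
      ext x
      simp only [Set.mem_inter_iff, Set.mem_preimage, Set.mem_image, Set.mem_Ioo, Set.mem_Ioc]
      constructor
      · rintro ⟨⟨r, ⟨hr1, hr2⟩, hrx⟩, hx1, hx2⟩
        obtain ⟨n, hn⟩ := coe_eq_coe.1 (hrx.symm : (x : 𝕋) = (r : 𝕋))
        have h1 : (n : ℝ) < 1 := by linarith
        have h2 : (-1 : ℝ) < n := by linarith
        have h1' : n < 1 := by exact_mod_cast h1
        have h2' : (-1 : ℤ) < n := by exact_mod_cast h2
        have hn0 : n = 0 := by omega
        subst hn0; simp only [Int.cast_zero, add_zero] at hn; subst hn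
        exact ⟨hx1, by linarith⟩
      · rintro ⟨hx1, hx2⟩
        exact ⟨⟨x, ⟨hx1, hx2⟩, rfl⟩, hx1, by linarith⟩
    rw [hset, Real.volume_Ioo]

lemma volume_singleton (x : 𝕋) : volume ({x} : Set 𝕋) = 0 := by
  obtain ⟨r, rfl⟩ : ∃ r : ℝ, (r : 𝕋) = x := Quotient.exists_rep x
  rw [AddCircle.add_projection_respects_measure (1:ℝ) r (measurableSet_singleton _)]
  have hsub : (QuotientAddGroup.mk ⁻¹' ({(r:𝕋)} : Set 𝕋) ∩ Set.Ioc r (r+1)) ⊆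
      Set.range (fun n : ℤ => r + n) := by
    rintro x ⟨hx, -⟩
    obtain ⟨n, hn⟩ := coe_eq_coe.1 (hx : (x:𝕋) = (r:𝕋))
    exact ⟨n, hn.symm⟩
  exact measure_mono_null hsub ((Set.countable_range _).measure_zero _)

lemma volume_arc {a l : ℝ} (hl1 : l ≤ 1) : volume (arc a l) = ENNReal.ofReal l := by
  rw [arc, volume_image_Ioo _ _ (by linarith)]
  ring_nf

def Dset (h : ℝ) (E : Set 𝕋) : Set 𝕋 :=
  {x : 𝕋 | ¬ (x + ((h : ℝ) : 𝕋) ∈ E ↔ x ∈ E)}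

lemma Dset_empty (h : ℝ) : Dset h (∅ : Set 𝕋) = ∅ := by
  ext x; simp [Dset]

lemma Dset_biUnion_subset (h : ℝ) (s : Finset ℕ) (E : ℕ → Set 𝕋) :
    Dset h (⋃ k ∈ s, E k) ⊆ ⋃ k ∈ s, Dset h (E k) := by
  intro x hx
  have hx' : ¬ ((x + ((h:ℝ):𝕋) ∈ ⋃ k ∈ s, E k) ↔ (x ∈ ⋃ k ∈ s, E k)) := hx
  by_cases h1 : x + ((h:ℝ):𝕋) ∈ ⋃ k ∈ s, E k
  · have h2 : x ∉ ⋃ k ∈ s, E k := fun hc => hx' ⟨fun _ => hc, fun _ => h1⟩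
    obtain ⟨k, hk, hmemk⟩ := Set.mem_iUnion₂.mp h1
    refine Set.mem_iUnion₂.mpr ⟨k, hk, fun hiff => h2 ?_⟩
    exact Set.mem_iUnion₂.mpr ⟨k, hk, hiff.1 hmemk⟩
  · have h2 : x ∈ ⋃ k ∈ s, E k := by
      by_contra hc; exact hx' ⟨fun hm => absurd hm h1, fun hm => absurd hm hc⟩
    obtain ⟨k, hk, hmemk⟩ := Set.mem_iUnion₂.mp h2
    refine Set.mem_iUnion₂.mpr ⟨k, hk, fun hiff => h1 ?_⟩
    exact Set.mem_iUnion₂.mpr ⟨k, hk, hiff.2 hmemk⟩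

lemma preimage_arc (h a l : ℝ) :
    {x : 𝕋 | x + ((h:ℝ):𝕋) ∈ arc a l} = arc (a - h) l := by
  ext x
  simp only [Set.mem_setOf_eq, arc, Set.mem_image, Set.mem_Ioo]
  constructor
  · rintro ⟨r, ⟨hr1, hr2⟩, hrx⟩
    refine ⟨r - h, ⟨by linarith, by linarith⟩, ?_⟩
    have : ((r - h : ℝ) : 𝕋) = (r : 𝕋) - ((h:ℝ):𝕋) := rfl
    rw [this, hrx]; exact add_sub_cancel_right x _
  · rintro ⟨s, ⟨hs1, hs2⟩, hsx⟩
    refine ⟨s + h, ⟨by linarith, by linarith⟩, ?_⟩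
    have : ((s + h : ℝ) : 𝕋) = (s : 𝕋) + ((h:ℝ):𝕋) := rfl
    rw [this, ← hsx]

lemma Dset_eq (h : ℝ) (E : Set 𝕋) :
    Dset h E = ({x : 𝕋 | x + ((h:ℝ):𝕋) ∈ E} \ E) ∪ (E \ {x : 𝕋 | x + ((h:ℝ):𝕋) ∈ E}) := by
  ext x
  simp only [Dset, Set.mem_setOf_eq, Set.mem_union, Set.mem_diff, Set.mem_setOf_eq]
  tauto

lemma volume_Dset_neg (h : ℝ) (E : Set 𝕋) :
    volume (Dset h E) = volume (Dset (-h) E) := by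
  have hpre : Dset h E = (fun x : 𝕋 => x + ((h:ℝ):𝕋)) ⁻¹' (Dset (-h) E) := by
    ext x
    simp only [Dset, Set.mem_preimage, Set.mem_setOf_eq]
    have hcast : (((-h : ℝ)) : 𝕋) = -((h:ℝ):𝕋) := rfl
    rw [hcast, add_neg_cancel_right]
    tauto
  rw [hpre, measure_preimage_add_right]

lemma volume_Dset_arc_nonneg {h a l : ℝ} (hh : 0 ≤ h) (hl : 0 < l) (hl1 : l ≤ 1) :
    volume (Dset h (arc a l)) ≤ ENNReal.ofReal (2 * min h l) := by
  rw [Dset_eq, preimage_arc]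
  refine le_trans (measure_union_le _ _) ?_
  rcases le_or_gt l h with hlh | hhl
  · have h1 : volume (arc (a - h) l \ arc a l) ≤ ENNReal.ofReal l := by
      refine le_trans (measure_mono Set.diff_subset) ?_
      rw [volume_arc hl1]
    have h2 : volume (arc a l \ arc (a - h) l) ≤ ENNReal.ofReal l := by
      refine le_trans (measure_mono Set.diff_subset) ?_
      rw [volume_arc hl1]
    calc volume (arc (a-h) l \ arc a l) + volume (arc a l \ arc (a-h) l)
        ≤ ENNReal.ofReal l + ENNReal.ofReal l := add_le_add h1 h2
      _ = ENNReal.ofReal (2 * min h l) := by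
          rw [← ENNReal.ofReal_add hl.le hl.le, min_eq_right hlh]; ring_nf
  · have sub1 : arc (a - h) l \ arc a l ⊆
        ((fun r : ℝ => (r : 𝕋)) '' Set.Ioo (a - h) a) ∪ {((a : ℝ):𝕋)} := by
      rintro x ⟨⟨r, ⟨hr1, hr2⟩, rfl⟩, hnot⟩
      rcases lt_trichotomy r a with hra | hra | hra
      · exact Or.inl ⟨r, ⟨hr1, hra⟩, rfl⟩
      · exact Or.inr (by simp [hra])
      · exact absurd ⟨r, ⟨hra, by linarith⟩, rfl⟩ hnot
    have sub2 : arc a l \ arc (a - h) l ⊆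
        ((fun r : ℝ => (r : 𝕋)) '' Set.Ioo (a + l - h) (a + l)) ∪ {((a + l - h : ℝ):𝕋)} := by
      rintro x ⟨⟨r, ⟨hr1, hr2⟩, rfl⟩, hnot⟩
      rcases lt_trichotomy (a + l - h) r with hra | hra | hra
      · exact Or.inl ⟨r, ⟨hra, hr2⟩, rfl⟩
      · exact Or.inr (by simp [hra])
      · exact absurd ⟨r, ⟨by linarith, by linarith⟩, rfl⟩ hnot
    have v1 : volume (arc (a - h) l \ arc a l) ≤ ENNReal.ofReal h := by
      refine le_trans (measure_mono sub1) (le_trans (measure_union_le _ _) ?_)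
      rw [volume_image_Ioo _ _ (by linarith), volume_singleton, add_zero]
      exact ENNReal.ofReal_le_ofReal (by linarith)
    have v2 : volume (arc a l \ arc (a - h) l) ≤ ENNReal.ofReal h := by
      refine le_trans (measure_mono sub2) (le_trans (measure_union_le _ _) ?_)
      rw [volume_image_Ioo _ _ (by linarith), volume_singleton, add_zero]
      exact ENNReal.ofReal_le_ofReal (by linarith)
    calc volume (arc (a-h) l \ arc a l) + volume (arc a l \ arc (a-h) l)
        ≤ ENNReal.ofReal h + ENNReal.ofReal h := add_le_add v1 v2
      _ = ENNReal.ofReal (2 * min h l) := by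
          rw [← ENNReal.ofReal_add hh hh, min_eq_left hhl.le]; ring_nf

lemma volume_Dset_arc {h a l : ℝ} (hl : 0 < l) (hl1 : l ≤ 1) :
    volume (Dset h (arc a l)) ≤ ENNReal.ofReal (2 * min |h| l) := by
  rcases le_or_gt 0 h with hh | hh
  · rw [abs_of_nonneg hh]; exact volume_Dset_arc_nonneg hh hl hl1
  · rw [volume_Dset_neg, abs_of_neg hh]
    exact volume_Dset_arc_nonneg (by linarith) hl hl1

lemma key_ineq (φ : ℝ → ℝ) (hpos : ∀ t ∈ Set.Ioc (0:ℝ) 1, 0 < φ t)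
    (hanti : AntitoneOn φ (Set.Ioc 0 1))
    (c : ℝ) (hc : 1 < c) (hmono : MonotoneOn (fun t => t * φ t) (Set.Ioo 0 (1/c)))
    (M : ℝ) (hM : ∀ s ∈ Set.Ioo (0:ℝ) (1/c), s * φ s ≤ M)
    (t : ℝ) (ht : 0 < t) (ht2 : t ≤ 1/(2*c))
    (n : ℕ) (hn : 1 ≤ n) (e : ℝ) (he : 0 < e) (he1 : e ≤ 1) :
    min ((n:ℝ) * t) e * φ t ≤ (max 1 (c * M / φ 1)) * (e * φ (e / n)) := by
  have hc0 : 0 < c := by linarith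
  have hn0 : (0:ℝ) < n := by exact_mod_cast hn
  have hen : e ≤ (n:ℝ) := le_trans he1 (by exact_mod_cast hn)
  set s := e / n with hs_def
  have hs0 : 0 < s := div_pos he hn0
  have hs1 : s ≤ 1 := by
    rw [div_le_one hn0]; exact hen
  have htc : t < 1/c := by
    have : 1/(2*c) < 1/c := by
      apply div_lt_div_of_pos_left one_pos hc0; linarith
    linarith
  have ht1 : t ≤ 1 := by
    have : 1/c < 1 := by rw [div_lt_one hc0]; exact hc
    linarith
  have htIoc : t ∈ Set.Ioc (0:ℝ) 1 := ⟨ht, ht1⟩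
  have hsIoc : s ∈ Set.Ioc (0:ℝ) 1 := ⟨hs0, hs1⟩
  have hφt : 0 < φ t := hpos t htIoc
  have hφs : 0 < φ s := hpos s hsIoc
  have hφ1 : 0 < φ 1 := hpos 1 ⟨one_pos, le_refl 1⟩
  have hφ1s : φ 1 ≤ φ s := hanti hsIoc ⟨one_pos, le_refl 1⟩ hs1
  have hM0 : 0 < M := lt_of_lt_of_le (mul_pos ht hφt) (hM t ⟨ht, htc⟩)
  have hKge : (1:ℝ) ≤ max 1 (c * M / φ 1) := le_max_left _ _
  have hKge2 : c * M / φ 1 ≤ max 1 (c * M / φ 1) := le_max_right _ _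
  have hK0 : 0 < max 1 (c * M / φ 1) := lt_of_lt_of_le one_pos hKge
  rcases le_or_gt s t with hst | hts
  · have h1 : φ t ≤ φ s := hanti hsIoc htIoc hst
    have h2 : min ((n:ℝ) * t) e * φ t ≤ e * φ s :=
      mul_le_mul (min_le_right _ _) h1 hφt.le he.le
    refine le_trans h2 ?_
    nlinarith [mul_pos he hφs]
  · rcases lt_or_ge s (1/c) with hsc | hsc
    · have hmm : t * φ t ≤ s * φ s := hmono ⟨ht, htc⟩ ⟨hs0, hsc⟩ hts.le
      have h1 : min ((n:ℝ) * t) e * φ t ≤ (n:ℝ) * (t * φ t) := by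
        rw [← mul_assoc]
        exact mul_le_mul_of_nonneg_right (min_le_left _ _) hφt.le
      have h2 : (n:ℝ) * (s * φ s) = e * φ s := by
        rw [hs_def]; field_simp
      refine le_trans h1 ?_
      have h3 : (n:ℝ) * (t * φ t) ≤ (n:ℝ) * (s * φ s) :=
        mul_le_mul_of_nonneg_left hmm hn0.le
      rw [h2] at h3
      refine le_trans h3 ?_
      nlinarith [mul_pos he hφs]
    · have hec : (n:ℝ)/c ≤ e := by
        rw [div_le_iff₀ hc0] at hsc ⊢
        calc (n:ℝ) = n * 1 := by ring
          _ ≤ n * (s * c) := by nlinarith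
          _ = e * c := by rw [hs_def]; field_simp
      have h1 : min ((n:ℝ) * t) e * φ t ≤ (n:ℝ) * (t * φ t) := by
        rw [← mul_assoc]
        exact mul_le_mul_of_nonneg_right (min_le_left _ _) hφt.le
      have h2 : (n:ℝ) * (t * φ t) ≤ (n:ℝ) * M :=
        mul_le_mul_of_nonneg_left (hM t ⟨ht, htc⟩) hn0.le
      have h3 : (n:ℝ) * M ≤ (c * M / φ 1) * (e * φ (e/n)) := by
        have he1' : (n:ℝ)/c * φ 1 ≤ e * φ s :=
          mul_le_mul hec hφ1s hφ1.le he.le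
        have : (c * M / φ 1) * ((n:ℝ)/c * φ 1) = (n:ℝ) * M := by
          field_simp
        rw [← this]
        exact mul_le_mul_of_nonneg_left he1' (by positivity)
      refine le_trans h1 (le_trans h2 (le_trans h3 ?_))
      exact mul_le_mul_of_nonneg_right hKge2 (by positivity)

lemma vol_layer_aux {A B : ℝ} (hA0 : 0 ≤ A) (hB1 : B ≤ 1) (hAB : A ≤ B) :
    volume ({y : ℝ | ¬ (y < A ↔ y < B)} ∩ Set.Ioo 0 1) = ENNReal.ofReal (B - A) := by
  apply le_antisymm
  · refine le_trans (measure_mono (show _ ⊆ Set.Ico A B from ?_)) ?_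
    · rintro y ⟨hy, hy0, hy1⟩
      simp only [Set.mem_setOf_eq] at hy
      constructor
      · by_contra hc; push_neg at hc; exact hy ⟨fun _ => by linarith, fun _ => hc⟩
      · by_contra hc; push_neg at hc
        exact hy ⟨fun h => absurd h (by linarith), fun h => absurd h (by linarith)⟩
    · rw [Real.volume_Ico]
  · refine le_trans (le_of_eq (Real.volume_Ioo (a := A) (b := B)).symm) (measure_mono ?_)
    rintro y ⟨hy1, hy2⟩
    refine ⟨fun hiff => ?_, by linarith, by linarith⟩
    exact absurd (hiff.2 hy2) (by linarith)

lemma vol_layer {A B : ℝ} (hA0 : 0 ≤ A) (hA1 : A ≤ 1) (hB0 : 0 ≤ B) (hB1 : B ≤ 1) :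
    volume ({y : ℝ | ¬ (y < A ↔ y < B)} ∩ Set.Ioo 0 1) = ENNReal.ofReal |A - B| := by
  rcases le_total A B with hAB | hBA
  · rw [abs_of_nonpos (by linarith), vol_layer_aux hA0 hB1 hAB]; ring_nf
  · have : {y : ℝ | ¬ (y < A ↔ y < B)} = {y : ℝ | ¬ (y < B ↔ y < A)} := by
      ext y; simp only [Set.mem_setOf_eq]; tauto
    rw [this, vol_layer_aux hB0 hA1 hBA, abs_of_nonneg (by linarith)]

lemma layer_cake (f : 𝕋 → ℝ) (hf : Continuous f)
    (hf0 : ∀ x, 0 ≤ f x) (hf1 : ∀ x, f x ≤ 1) (h : ℝ) :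
    ∫⁻ x : 𝕋, ENNReal.ofReal |f (x + ((h:ℝ):𝕋)) - f x| =
      ∫⁻ y in Set.Ioo (0:ℝ) 1, volume {x : 𝕋 | ¬ (y < f (x + ((h:ℝ):𝕋)) ↔ y < f x)} := by
  set S : Set (𝕋 × ℝ) := {p | ¬ (p.2 < f (p.1 + ((h:ℝ):𝕋)) ↔ p.2 < f p.1)} with hS_def
  have hcont : Continuous (fun x : 𝕋 => f (x + ((h:ℝ):𝕋))) :=
    hf.comp (continuous_id.add continuous_const)
  have hU : MeasurableSet {p : 𝕋 × ℝ | p.2 < f (p.1 + ((h:ℝ):𝕋))} :=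
    measurableSet_lt measurable_snd ((hcont.comp continuous_fst).measurable)
  have hV : MeasurableSet {p : 𝕋 × ℝ | p.2 < f p.1} :=
    measurableSet_lt measurable_snd ((hf.comp continuous_fst).measurable)
  have hS : MeasurableSet S := by
    have : S = ({p : 𝕋 × ℝ | p.2 < f (p.1 + ((h:ℝ):𝕋))} \ {p | p.2 < f p.1}) ∪
        ({p | p.2 < f p.1} \ {p : 𝕋 × ℝ | p.2 < f (p.1 + ((h:ℝ):𝕋))}) := by
      ext p; simp only [hS_def, Set.mem_setOf_eq, Set.mem_union, Set.mem_diff, Set.mem_setOf_eq]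
      tauto
    rw [this]
    exact (hU.diff hV).union (hV.diff hU)
  have hslice1 : ∀ x : 𝕋, ∫⁻ y in Set.Ioo (0:ℝ) 1, S.indicator (fun _ => (1:ℝ≥0∞)) (x, y) =
      ENNReal.ofReal |f (x + ((h:ℝ):𝕋)) - f x| := by
    intro x
    have hTmeas : MeasurableSet {y : ℝ | (x, y) ∈ S} := measurable_prodMk_left hS
    have heq : (fun y => S.indicator (fun _ => (1:ℝ≥0∞)) (x, y)) =
        fun y => ({y : ℝ | (x, y) ∈ S}).indicator (fun _ => (1:ℝ≥0∞)) y := by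
      funext y
      by_cases hmem : (x, y) ∈ S
      · rw [Set.indicator_of_mem hmem, Set.indicator_of_mem (by exact hmem)]
      · rw [Set.indicator_of_notMem hmem, Set.indicator_of_notMem (by exact hmem)]
    rw [heq, lintegral_indicator_const hTmeas 1, one_mul, Measure.restrict_apply hTmeas]
    have hsets : {y : ℝ | (x, y) ∈ S} = {y : ℝ | ¬ (y < f (x + ((h:ℝ):𝕋)) ↔ y < f x)} := rfl
    rw [hsets]
    exact vol_layer (hf0 _) (hf1 _) (hf0 x) (hf1 x)
  have hslice2 : ∀ y : ℝ, ∫⁻ x : 𝕋, S.indicator (fun _ => (1:ℝ≥0∞)) (x, y) =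
      volume {x : 𝕋 | ¬ (y < f (x + ((h:ℝ):𝕋)) ↔ y < f x)} := by
    intro y
    have hTmeas : MeasurableSet {x : 𝕋 | (x, y) ∈ S} := measurable_prodMk_right hS
    have heq : (fun x => S.indicator (fun _ => (1:ℝ≥0∞)) (x, y)) =
        fun x => ({x : 𝕋 | (x, y) ∈ S}).indicator (fun _ => (1:ℝ≥0∞)) x := by
      funext x
      by_cases hmem : (x, y) ∈ S
      · rw [Set.indicator_of_mem hmem, Set.indicator_of_mem (by exact hmem)]
      · rw [Set.indicator_of_notMem hmem, Set.indicator_of_notMem (by exact hmem)]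
    rw [heq, lintegral_indicator_const hTmeas 1, one_mul]
    rfl
  calc ∫⁻ x : 𝕋, ENNReal.ofReal |f (x + ((h:ℝ):𝕋)) - f x|
      = ∫⁻ x : 𝕋, ∫⁻ y in Set.Ioo (0:ℝ) 1, S.indicator (fun _ => (1:ℝ≥0∞)) (x, y) := by
        exact lintegral_congr fun x => (hslice1 x).symm
    _ = ∫⁻ y in Set.Ioo (0:ℝ) 1, ∫⁻ x : 𝕋, S.indicator (fun _ => (1:ℝ≥0∞)) (x, y) := by
        apply lintegral_lintegral_swap
        exact (measurable_one.indicator hS).aemeasurable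
    _ = ∫⁻ y in Set.Ioo (0:ℝ) 1, volume {x : 𝕋 | ¬ (y < f (x + ((h:ℝ):𝕋)) ↔ y < f x)} := by
        exact lintegral_congr fun y => hslice2 y

end StmtOneHelper

open StmtOneHelper in
/-- If `f` is continuous on the circle with `0 ≤ f ≤ 1`, `φ ∈ Φ`, for a.e.
`y ∈ [0,1)` the superlevel set `E_y` is a union of `N y` disjoint open arcs, and
`∫₀¹ |E_y| φ(|E_y|/N(E_y)) dy < ∞` (integrand `0` when `E_y = ∅`), then
`ω(f,t)_1 ≤ C/φ(t)` on `(0,1]` for some `C > 0`. -/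
theorem stmt_1 (f : AddCircle (1:ℝ) → ℝ) (hf : Continuous f)
    (hf0 : ∀ x, 0 ≤ f x) (hf1 : ∀ x, f x ≤ 1)
    (φ : ℝ → ℝ) (hφ : IsPhiClass φ)
    (N : ℝ → ℕ) (a l : ℝ → ℕ → ℝ)
    (hdecomp : ∀ᵐ y ∂(volume.restrict (Set.Ico (0:ℝ) 1)),
      ({x : AddCircle (1:ℝ) | f x > y} = ⋃ k ∈ Finset.range (N y), arc (a y k) (l y k)) ∧
      ((Finset.range (N y) : Set ℕ).PairwiseDisjoint (fun k => arc (a y k) (l y k))) ∧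
      (∀ k ∈ Finset.range (N y), l y k ∈ Set.Ioc (0:ℝ) 1))
    (hint : ∫⁻ y in Set.Ioo (0:ℝ) 1,
      (if N y = 0 then 0 else ENNReal.ofReal
        ((volume {x : AddCircle (1:ℝ) | f x > y}).toReal *
          φ ((volume {x : AddCircle (1:ℝ) | f x > y}).toReal / (N y : ℝ)))) < ⊤) :
    ∃ C > 0, ∀ t ∈ Set.Ioc (0:ℝ) 1, modulus f 1 t ≤ C / φ t := by
  obtain ⟨hpos, hanti, c, hc, hmono, hconc, hbdd⟩ := hφ
  obtain ⟨M, hMub⟩ := hbdd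
  have hM : ∀ s ∈ Set.Ioo (0:ℝ) (1/c), s * φ s ≤ M := fun s hs => hMub ⟨s, hs, rfl⟩
  set K := max 1 (c * M / φ 1) with hK_def
  have hK0 : (0:ℝ) < K := lt_of_lt_of_le one_pos (le_max_left _ _)
  set G : ℝ → ℝ≥0∞ := fun y => (if N y = 0 then 0 else ENNReal.ofReal
        ((volume {x : AddCircle (1:ℝ) | f x > y}).toReal *
          φ ((volume {x : AddCircle (1:ℝ) | f x > y}).toReal / (N y : ℝ)))) with hG_def
  set I0 : ℝ≥0∞ := ∫⁻ y in Set.Ioo (0:ℝ) 1, G y with hI0_def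
  have hI0ne : I0 ≠ ⊤ := hint.ne
  set A := I0.toReal with hA_def
  have hA0 : 0 ≤ A := ENNReal.toReal_nonneg
  have hc0 : (0:ℝ) < c := by linarith
  have ht0c : (0:ℝ) < 1/(2*c) := by positivity
  have ht0c1 : 1/(2*c) ≤ 1 := by
    rw [div_le_one (by linarith)]; linarith
  have hφc : 0 < φ (1/(2*c)) := hpos _ ⟨ht0c, ht0c1⟩
  have huniv : (volume : Measure (AddCircle (1:ℝ))) Set.univ = 1 := by simp
  set C := max (φ (1/(2*c))) (2*K*A + 1) with hC_def
  have hC0 : (0:ℝ) < C :=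
    lt_of_lt_of_le (by positivity) (le_max_right _ _)
  refine ⟨C, hC0, ?_⟩
  intro t ht
  have hφt : 0 < φ t := hpos t ht
  haveI : Nonempty {h : ℝ // |h| ≤ t} := ⟨⟨0, by simpa using ht.1.le⟩⟩
  have hmod : modulus f 1 t =
      ⨆ h : {h : ℝ // |h| ≤ t},
        ∫ x : AddCircle (1:ℝ), |f (x + ((h.1 : ℝ) : AddCircle (1:ℝ))) - f x| := by
    unfold modulus
    norm_num [Real.rpow_one]
  rw [hmod]
  have hcont : ∀ h : ℝ, Continuous fun x : AddCircle (1:ℝ) =>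
      |f (x + ((h:ℝ) : AddCircle (1:ℝ))) - f x| :=
    fun h => ((hf.comp (continuous_id.add continuous_const)).sub hf).abs
  have habs1 : ∀ (h : ℝ) (x : AddCircle (1:ℝ)),
      |f (x + ((h:ℝ) : AddCircle (1:ℝ))) - f x| ≤ 1 := by
    intro h x
    rw [abs_le]
    constructor
    · linarith [hf0 (x + ((h:ℝ) : AddCircle (1:ℝ))), hf1 x]
    · linarith [hf1 (x + ((h:ℝ) : AddCircle (1:ℝ))), hf0 x]
  have hInt : ∀ h : ℝ, Integrable
      (fun x : AddCircle (1:ℝ) => |f (x + ((h:ℝ) : AddCircle (1:ℝ))) - f x|) volume := by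
    intro h
    refine (integrable_const (1:ℝ)).mono' (hcont h).aestronglyMeasurable
      (ae_of_all _ fun x => ?_)
    rw [Real.norm_eq_abs, abs_abs]
    exact habs1 h x
  have hIeq : ∀ h : ℝ, ∫ x : AddCircle (1:ℝ), |f (x + ((h:ℝ) : AddCircle (1:ℝ))) - f x| =
      (∫⁻ x : AddCircle (1:ℝ),
        ENNReal.ofReal |f (x + ((h:ℝ) : AddCircle (1:ℝ))) - f x|).toReal := by
    intro h
    rw [integral_eq_lintegral_of_nonneg_ae (ae_of_all _ fun x => abs_nonneg _)
      (hcont h).aestronglyMeasurable]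
  have hIle1 : ∀ h : ℝ, ∫ x : AddCircle (1:ℝ), |f (x + ((h:ℝ) : AddCircle (1:ℝ))) - f x| ≤ 1 := by
    intro h
    calc ∫ x : AddCircle (1:ℝ), |f (x + ((h:ℝ) : AddCircle (1:ℝ))) - f x|
        ≤ ∫ _x : AddCircle (1:ℝ), (1:ℝ) :=
          integral_mono (hInt h) (integrable_const 1) (fun x => habs1 h x)
      _ = 1 := by
          rw [integral_const, measureReal_def, huniv]; norm_num
  have hmain : t ≤ 1/(2*c) → ∀ h : ℝ, |h| ≤ t →
      ∫ x : AddCircle (1:ℝ), |f (x + ((h:ℝ) : AddCircle (1:ℝ))) - f x| ≤ (2*K*A)/φ t := by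
    intro htc h hh
    have hae : ∀ᵐ y ∂(volume.restrict (Set.Ioo (0:ℝ) 1)),
        volume {x : AddCircle (1:ℝ) |
            ¬ (y < f (x + ((h:ℝ) : AddCircle (1:ℝ))) ↔ y < f x)} ≤
          ENNReal.ofReal (2*K/φ t) * G y := by
      have hd' := ae_restrict_of_ae_restrict_of_subset Set.Ioo_subset_Ico_self hdecomp
      filter_upwards [hd'] with y hy
      obtain ⟨hE, hdisj, hIoc⟩ := hy
      have hDset : {x : AddCircle (1:ℝ) |
          ¬ (y < f (x + ((h:ℝ) : AddCircle (1:ℝ))) ↔ y < f x)} =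
          Dset h {x : AddCircle (1:ℝ) | f x > y} := rfl
      rw [hDset]
      by_cases hN : N y = 0
      · have hEempty : {x : AddCircle (1:ℝ) | f x > y} = ∅ := by
          rw [hE, hN]; simp
        rw [hEempty, Dset_empty, measure_empty, hG_def]
        simp [hN]
      · have hn1 : 1 ≤ N y := Nat.one_le_iff_ne_zero.mpr hN
        set n := N y with hn_def
        set e := ∑ k ∈ Finset.range n, l y k with he_def
        have hvolE : volume {x : AddCircle (1:ℝ) | f x > y} = ENNReal.ofReal e := by
          rw [hE, measure_biUnion_finset hdisj (fun k _ => (isOpen_arc _ _).measurableSet)]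
          rw [he_def, ENNReal.ofReal_sum_of_nonneg (fun k hk => (hIoc k hk).1.le)]
          exact Finset.sum_congr rfl fun k hk => volume_arc (hIoc k hk).2
        have he0 : 0 < e :=
          Finset.sum_pos (fun k hk => (hIoc k hk).1) ⟨0, Finset.mem_range.mpr hn1⟩
        have he1 : e ≤ 1 := by
          have h1 : ENNReal.ofReal e ≤ ENNReal.ofReal 1 := by
            rw [← hvolE]
            simpa using (measure_mono (Set.subset_univ _)).trans_eq huniv
          exact (ENNReal.ofReal_le_ofReal_iff one_pos.le).mp h1
        have htoReal : (volume {x : AddCircle (1:ℝ) | f x > y}).toReal = e := by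
          rw [hvolE, ENNReal.toReal_ofReal he0.le]
        have hsum1 : ∑ k ∈ Finset.range n, min |h| (l y k) ≤ (n:ℝ) * t := by
          calc ∑ k ∈ Finset.range n, min |h| (l y k)
              ≤ ∑ _k ∈ Finset.range n, t :=
                Finset.sum_le_sum fun k _hk => le_trans (min_le_left _ _) hh
            _ = (n:ℝ) * t := by
                rw [Finset.sum_const, Finset.card_range, nsmul_eq_mul]
        have hsum2 : ∑ k ∈ Finset.range n, min |h| (l y k) ≤ e :=
          Finset.sum_le_sum fun k _hk => min_le_right _ _
        have hkey := key_ineq φ hpos hanti c hc hmono M hM t ht.1 htc n hn1 e he0 he1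
        calc volume (Dset h {x : AddCircle (1:ℝ) | f x > y})
            ≤ ∑ k ∈ Finset.range n, volume (Dset h (arc (a y k) (l y k))) := by
              rw [hE]
              exact le_trans (measure_mono (Dset_biUnion_subset h _ _))
                (measure_biUnion_finset_le _ _)
          _ ≤ ∑ k ∈ Finset.range n, ENNReal.ofReal (2 * min |h| (l y k)) :=
              Finset.sum_le_sum fun k hk => volume_Dset_arc (hIoc k hk).1 (hIoc k hk).2
          _ = ENNReal.ofReal (∑ k ∈ Finset.range n, 2 * min |h| (l y k)) :=
              (ENNReal.ofReal_sum_of_nonneg (fun k hk =>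
                mul_nonneg zero_le_two (le_min (abs_nonneg _) (hIoc k hk).1.le))).symm
          _ ≤ ENNReal.ofReal ((2*K/φ t) * (e * φ (e/n))) := by
              apply ENNReal.ofReal_le_ofReal
              have hsum3 : ∑ k ∈ Finset.range n, 2 * min |h| (l y k) =
                  2 * ∑ k ∈ Finset.range n, min |h| (l y k) := by
                rw [Finset.mul_sum]
              rw [hsum3, div_mul_eq_mul_div, le_div_iff₀ hφt]
              have hminle : (∑ k ∈ Finset.range n, min |h| (l y k)) ≤ min ((n:ℝ)*t) e :=
                le_min hsum1 hsum2
              have h5 : (∑ k ∈ Finset.range n, min |h| (l y k)) * φ t ≤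
                  min ((n:ℝ)*t) e * φ t :=
                mul_le_mul_of_nonneg_right hminle hφt.le
              nlinarith [hkey, h5]
          _ = ENNReal.ofReal (2*K/φ t) * ENNReal.ofReal (e * φ (e/n)) :=
              ENNReal.ofReal_mul (by positivity)
          _ = ENNReal.ofReal (2*K/φ t) * G y := by
              rw [hG_def]
              simp only [← hn_def, if_neg hN, htoReal]
    have hlin : ∫⁻ x : AddCircle (1:ℝ),
        ENNReal.ofReal |f (x + ((h:ℝ) : AddCircle (1:ℝ))) - f x| ≤
          ENNReal.ofReal (2*K/φ t) * I0 := by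
      rw [layer_cake f hf hf0 hf1 h]
      calc ∫⁻ y in Set.Ioo (0:ℝ) 1, volume {x : AddCircle (1:ℝ) |
              ¬ (y < f (x + ((h:ℝ) : AddCircle (1:ℝ))) ↔ y < f x)}
          ≤ ∫⁻ y in Set.Ioo (0:ℝ) 1, ENNReal.ofReal (2*K/φ t) * G y := lintegral_mono_ae hae
        _ = ENNReal.ofReal (2*K/φ t) * I0 := by
            rw [hI0_def]
            exact lintegral_const_mul' _ _ ENNReal.ofReal_ne_top
    rw [hIeq h]
    have hne : ENNReal.ofReal (2*K/φ t) * I0 ≠ ⊤ :=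
      ENNReal.mul_ne_top ENNReal.ofReal_ne_top hI0ne
    calc (∫⁻ x : AddCircle (1:ℝ),
          ENNReal.ofReal |f (x + ((h:ℝ) : AddCircle (1:ℝ))) - f x|).toReal
        ≤ (ENNReal.ofReal (2*K/φ t) * I0).toReal := ENNReal.toReal_mono hne hlin
      _ = (2*K/φ t) * A := by
          rw [ENNReal.toReal_mul, ENNReal.toReal_ofReal (by positivity)]
      _ = (2*K*A)/φ t := by ring
  rcases le_or_gt t (1/(2*c)) with hsm | hlg
  · refine ciSup_le fun h => ?_
    refine le_trans (hmain hsm h.1 h.2) ?_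
    have hCge : 2*K*A ≤ C := le_trans (by linarith) (le_max_right _ _)
    gcongr
  · refine ciSup_le fun h => ?_
    refine le_trans (hIle1 h.1) ?_
    rw [le_div_iff₀ hφt, one_mul]
    calc φ t ≤ φ (1/(2*c)) := hanti ⟨ht0c, ht0c1⟩ ht hlg.le
      _ ≤ C := le_max_left _ _
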